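/- Specification of the identity type: if M is a pure β-normalizing metaterm with ⟨𝐚⇒𝐚⟩M ↠ ⋆, then M is β-convertible to the identity λx.x. -/

import Mathlib

/-! The metacalculus λ→m for minimal logic: untyped λ-calculus extended with
a success constant ⋆, a guard construct (M; N), and generators ✠𝐚 / verifiers ⟨𝐚⟩
for atomic types. Terms use de Bruijn indices. -/

/-- Simple types: atomic types and arrows. -/
inductive Ty : Type
  | atom : ℕ → Ty
  | arrow : Ty → Ty → Ty

/-- Metaterms of the metacalculus λ→m (de Bruijn indices). -/
inductive Tm : Type
  | var : ℕ → Tm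
  | lam : Tm → Tm
  | app : Tm → Tm → Tm
  | star : Tm
  | guard : Tm → Tm → Tm
  | gen : ℕ → Tm
  | verif : ℕ → Tm → Tm

namespace Tm

/-- Shift de Bruijn indices ≥ c by d. -/
def shift (d c : ℕ) : Tm → Tm
  | var n => if n < c then var n else var (n + d)
  | lam M => lam (shift d (c+1) M)
  | app M N => app (shift d c M) (shift d c N)
  | star => star
  | guard M N => guard (shift d c M) (shift d c N)
  | gen a => gen a
  | verif a M => verif a (shift d c M)

/-- Capture-avoiding substitution of the variable k by N. -/
def subst (k : ℕ) (N : Tm) : Tm → Tm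
  | var n => if n = k then N else if k < n then var (n - 1) else var n
  | lam M => lam (subst (k+1) (shift 1 0 N) M)
  | app M P => app (subst k N M) (subst k N P)
  | star => star
  | guard M P => guard (subst k N M) (subst k N P)
  | gen a => gen a
  | verif a M => verif a (subst k N M)

/-- Pure metaterms: only variables, abstractions and applications. -/
def Pure : Tm → Prop
  | var _ => True
  | lam M => Pure M
  | app M N => Pure M ∧ Pure N
  | _ => False

end Tm

/-- One-step reduction of λ→m, closed under arbitrary contexts. -/
inductive Step : Tm → Tm → Prop
  | beta (M N : Tm) : Step (.app (.lam M) N) (Tm.subst 0 N M)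
  | guardStar (M : Tm) : Step (.guard .star M) M
  | verifGen (a : ℕ) : Step (.verif a (.gen a)) .star
  | lam {M M'} : Step M M' → Step (.lam M) (.lam M')
  | appL {M M'} (N) : Step M M' → Step (.app M N) (.app M' N)
  | appR {N N'} (M) : Step N N' → Step (.app M N) (.app M N')
  | guardL {M M'} (N) : Step M M' → Step (.guard M N) (.guard M' N)
  | guardR {N N'} (M) : Step N N' → Step (.guard M N) (.guard M N')
  | verif {M M'} (a) : Step M M' → Step (.verif a M) (.verif a M')

/-- Weak head reduction of λ→m: the rules closed under weak head contexts only. -/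
inductive WStep : Tm → Tm → Prop
  | beta (M N : Tm) : WStep (.app (.lam M) N) (Tm.subst 0 N M)
  | guardStar (M : Tm) : WStep (.guard .star M) M
  | verifGen (a : ℕ) : WStep (.verif a (.gen a)) .star
  | appL {M M'} (N) : WStep M M' → WStep (.app M N) (.app M' N)
  | guardL {M M'} (N) : WStep M M' → WStep (.guard M N) (.guard M' N)
  | verif {M M'} (a) : WStep M M' → WStep (.verif a M) (.verif a M')

/-- β-reduction alone, closed under arbitrary contexts. -/
inductive BStep : Tm → Tm → Prop
  | beta (M N : Tm) : BStep (.app (.lam M) N) (Tm.subst 0 N M)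
  | lam {M M'} : BStep M M' → BStep (.lam M) (.lam M')
  | appL {M M'} (N) : BStep M M' → BStep (.app M N) (.app M' N)
  | appR {N N'} (M) : BStep N N' → BStep (.app M N) (.app M N')
  | guardL {M M'} (N) : BStep M M' → BStep (.guard M N) (.guard M' N)
  | guardR {N N'} (M) : BStep N N' → BStep (.guard M N) (.guard M N')
  | verif {M M'} (a) : BStep M M' → BStep (.verif a M) (.verif a M')

mutual
/-- The generator ✠A for an arbitrary simple type A. -/
def genT : Ty → Tm
  | .atom a => .gen a
  | .arrow A B => .lam (.guard (verifT A (.var 0)) (genT B))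
/-- The verifier ⟨A⟩M for an arbitrary simple type A applied to M. -/
def verifT : Ty → Tm → Tm
  | .atom a, M => .verif a M
  | .arrow A B, M => verifT B (.app M (genT A))
end




namespace AuxId

open Relation Tm

/-- Quasi-pure terms: variables, lambdas, applications and generators. -/
def Quasi : Tm → Prop
  | .var _ => True
  | .lam M => Quasi M
  | .app M N => Quasi M ∧ Quasi N
  | .gen _ => True
  | _ => False

lemma pure_quasi : ∀ (M : Tm), Tm.Pure M → Quasi M := by
  intro M; induction M <;> simp_all [Tm.Pure, Quasi]

lemma quasi_shift (d : ℕ) : ∀ (M : Tm) (c : ℕ), Quasi M → Quasi (Tm.shift d c M) := by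
  intro M; induction M with
  | var n =>
      intro c _; simp only [Tm.shift]; split <;> trivial
  | lam M ih =>
      intro c h; exact ih (c+1) h
  | app M N ihM ihN =>
      intro c h; exact ⟨ihM c h.1, ihN c h.2⟩
  | gen a =>
      intro c _; trivial
  | star =>
      intro c h; exact h.elim
  | guard M N ihM ihN =>
      intro c h; exact h.elim
  | verif a M ih =>
      intro c h; exact h.elim

lemma pure_shift (d : ℕ) : ∀ (M : Tm) (c : ℕ), Tm.Pure M → Tm.Pure (Tm.shift d c M) := by
  intro M; induction M with
  | var n =>
      intro c _; simp only [Tm.shift]; split <;> trivial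
  | lam M ih =>
      intro c h; exact ih (c+1) h
  | app M N ihM ihN =>
      intro c h; exact ⟨ihM c h.1, ihN c h.2⟩
  | gen a =>
      intro c h; exact h.elim
  | star =>
      intro c h; exact h.elim
  | guard M N ihM ihN =>
      intro c h; exact h.elim
  | verif a M ih =>
      intro c h; exact h.elim

lemma quasi_subst : ∀ (M : Tm) (k : ℕ) (N : Tm), Quasi N → Quasi M →
    Quasi (Tm.subst k N M) := by
  intro M; induction M with
  | var n =>
      intro k N hN _; simp only [Tm.subst]; split
      · exact hN
      · split <;> trivial
  | lam M ih =>
      intro k N hN h; exact ih (k+1) _ (quasi_shift 1 N 0 hN) h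
  | app M P ihM ihP =>
      intro k N hN h; exact ⟨ihM k N hN h.1, ihP k N hN h.2⟩
  | gen a =>
      intro k N _ _; trivial
  | star =>
      intro k N _ h; exact h.elim
  | guard M P ihM ihP =>
      intro k N _ h; exact h.elim
  | verif a M ih =>
      intro k N _ h; exact h.elim

lemma pure_subst : ∀ (M : Tm) (k : ℕ) (N : Tm), Tm.Pure N → Tm.Pure M →
    Tm.Pure (Tm.subst k N M) := by
  intro M; induction M with
  | var n =>
      intro k N hN _; simp only [Tm.subst]; split
      · exact hN
      · split <;> trivial
  | lam M ih =>
      intro k N hN h; exact ih (k+1) _ (pure_shift 1 N 0 hN) h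
  | app M P ihM ihP =>
      intro k N hN h; exact ⟨ihM k N hN h.1, ihP k N hN h.2⟩
  | gen a =>
      intro k N _ h; exact h.elim
  | star =>
      intro k N _ h; exact h.elim
  | guard M P ihM ihP =>
      intro k N _ h; exact h.elim
  | verif a M ih =>
      intro k N _ h; exact h.elim

/-- On quasi-pure terms, every step is a β-step, and quasi-purity is preserved. -/
lemma step_quasi : ∀ {t t' : Tm}, Step t t' → Quasi t → BStep t t' ∧ Quasi t' := by
  intro t t' h
  induction h with
  | beta M N =>
      intro hq
      exact ⟨BStep.beta M N, quasi_subst M 0 N hq.2 hq.1⟩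
  | guardStar M =>
      intro hq; exact hq.elim
  | verifGen a =>
      intro hq; exact hq.elim
  | lam h ih =>
      intro hq; exact ⟨BStep.lam (ih hq).1, (ih hq).2⟩
  | appL N h ih =>
      intro hq; exact ⟨BStep.appL N (ih hq.1).1, ⟨(ih hq.1).2, hq.2⟩⟩
  | appR M h ih =>
      intro hq; exact ⟨BStep.appR M (ih hq.2).1, ⟨hq.1, (ih hq.2).2⟩⟩
  | guardL N h ih =>
      intro hq; exact hq.elim
  | guardR M h ih =>
      intro hq; exact hq.elim
  | verif a h ih =>
      intro hq; exact hq.elim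

lemma steps_quasi {t u : Tm} (h : Relation.ReflTransGen Step t u) (hq : Quasi t) :
    Relation.ReflTransGen BStep t u := by
  induction h using Relation.ReflTransGen.head_induction_on with
  | refl => exact Relation.ReflTransGen.refl
  | head h' _ ih =>
      obtain ⟨hb, hq'⟩ := step_quasi h' hq
      exact Relation.ReflTransGen.head hb (ih hq')

/-- Inversion of the verifier: if ⟨a⟩X reduces to ⋆ then X reduces to ✠a. -/
lemma verif_star {a : ℕ} : ∀ {t : Tm}, Relation.ReflTransGen Step t Tm.star →
    ∀ X, t = Tm.verif a X → Relation.ReflTransGen Step X (Tm.gen a) := by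
  intro t h
  induction h using Relation.ReflTransGen.head_induction_on with
  | refl =>
      intro X hX; cases hX
  | head h' hrest ih =>
      intro X hX; subst hX
      cases h' with
      | verifGen => exact Relation.ReflTransGen.refl
      | verif _ h'' => exact Relation.ReflTransGen.head h'' (ih _ rfl)

lemma shift_gen (a d c : ℕ) : Tm.shift d c (Tm.gen a) = Tm.gen a := rfl

lemma shift_subst_gen (a : ℕ) : ∀ (T : Tm) (c m : ℕ), c ≤ m →
    Tm.shift 1 c (Tm.subst m (Tm.gen a) T) =
      Tm.subst (m+1) (Tm.gen a) (Tm.shift 1 c T) := by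
  intro T; induction T with
  | var n =>
      intro c m hcm
      simp only [Tm.subst, Tm.shift]
      split_ifs <;>
        (try simp only [Tm.subst, Tm.shift]) <;> (try split_ifs) <;>
        (try simp only [Tm.subst, Tm.shift]) <;> (try split_ifs) <;>
        first
        | rfl
        | (simp only [Tm.var.injEq]; omega)
        | (exfalso; omega)
  | lam M ih =>
      intro c m hcm
      simp only [Tm.subst, Tm.shift, shift_gen]
      rw [ih (c+1) (m+1) (by omega)]
  | app M N ihM ihN =>
      intro c m hcm
      simp only [Tm.subst, Tm.shift, ihM c m hcm, ihN c m hcm]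
  | star =>
      intro c m _; rfl
  | guard M N ihM ihN =>
      intro c m hcm
      simp only [Tm.subst, Tm.shift, ihM c m hcm, ihN c m hcm]
  | gen b =>
      intro c m _; rfl
  | verif b M ih =>
      intro c m hcm
      simp only [Tm.subst, Tm.shift, ih c m hcm]

lemma subst_gen_closed (a : ℕ) (j : ℕ) (T : Tm) :
    Tm.subst j T (Tm.gen a) = Tm.gen a := rfl

lemma subst_subst_gen (a : ℕ) : ∀ (S T : Tm) (j m : ℕ), j ≤ m →
    Tm.subst m (Tm.gen a) (Tm.subst j T S) =
      Tm.subst j (Tm.subst m (Tm.gen a) T) (Tm.subst (m+1) (Tm.gen a) S) := by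
  intro S; induction S with
  | var n =>
      intro T j m hjm
      simp only [Tm.subst]
      split_ifs <;>
        (try simp only [Tm.subst, Tm.shift]) <;> (try split_ifs) <;>
        (try simp only [Tm.subst, Tm.shift]) <;> (try split_ifs) <;>
        first
        | rfl
        | (simp only [Tm.var.injEq]; omega)
        | (exfalso; omega)
  | lam M ih =>
      intro T j m hjm
      simp only [Tm.subst, shift_gen]
      rw [ih (Tm.shift 1 0 T) (j+1) (m+1) (by omega),
        shift_subst_gen a T 0 m (by omega)]
  | app M P ihM ihP =>
      intro T j m hjm
      simp only [Tm.subst, ihM T j m hjm, ihP T j m hjm]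
  | star =>
      intro T j m _; rfl
  | guard M P ihM ihP =>
      intro T j m hjm
      simp only [Tm.subst, ihM T j m hjm, ihP T j m hjm]
  | gen b =>
      intro T j m _; rfl
  | verif b M ih =>
      intro T j m hjm
      simp only [Tm.subst, ih T j m hjm]

lemma no_step_var {n : ℕ} {Q : Tm} (h : BStep (Tm.var n) Q) : False := by cases h
lemma no_step_gen {a : ℕ} {Q : Tm} (h : BStep (Tm.gen a) Q) : False := by cases h

lemma pure_step : ∀ {t t' : Tm}, BStep t t' → Tm.Pure t → Tm.Pure t' := by
  intro t t' h
  induction h with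
  | beta M N =>
      intro hp; exact pure_subst M 0 N hp.2 hp.1
  | lam _ ih =>
      intro hp; exact ih hp
  | appL N _ ih =>
      intro hp; exact ⟨ih hp.1, hp.2⟩
  | appR M _ ih =>
      intro hp; exact ⟨hp.1, ih hp.2⟩
  | guardL _ _ _ =>
      intro hp; exact hp.elim
  | guardR _ _ _ =>
      intro hp; exact hp.elim
  | verif _ _ _ =>
      intro hp; exact hp.elim

lemma bstep_app_inv {X Y Q : Tm} (h : BStep (Tm.app X Y) Q) :
    (∃ S, X = Tm.lam S ∧ Q = Tm.subst 0 Y S) ∨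
    (∃ X', BStep X X' ∧ Q = Tm.app X' Y) ∨
    (∃ Y', BStep Y Y' ∧ Q = Tm.app X Y') := by
  cases h with
  | beta S N => exact Or.inl ⟨S, rfl, rfl⟩
  | appL _ h' => exact Or.inr (Or.inl ⟨_, h', rfl⟩)
  | appR _ h' => exact Or.inr (Or.inr ⟨_, h', rfl⟩)

lemma subst_eq_lam {a m : ℕ} {P S : Tm} (h : Tm.subst m (Tm.gen a) P = Tm.lam S) :
    ∃ S0, P = Tm.lam S0 ∧ S = Tm.subst (m+1) (Tm.gen a) S0 := by
  cases P with
  | var n => simp only [Tm.subst] at h; split_ifs at h <;> cases h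
  | lam S0 =>
      simp only [Tm.subst, shift_gen] at h
      exact ⟨S0, rfl, (Tm.lam.inj h).symm⟩
  | app _ _ => cases h
  | star => cases h
  | guard _ _ => cases h
  | gen _ => cases h
  | verif _ _ => cases h

/-- Lifting a β-step of `P[m := ✠a]` (P pure) to a β-step of P. -/
lemma lift (a : ℕ) : ∀ (P : Tm) (m : ℕ) (Q : Tm), Tm.Pure P →
    BStep (Tm.subst m (Tm.gen a) P) Q →
    ∃ P', BStep P P' ∧ Q = Tm.subst m (Tm.gen a) P' ∧ Tm.Pure P' := by
  intro P; induction P with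
  | var n =>
      intro m Q _ h
      simp only [Tm.subst] at h
      split_ifs at h
      · exact (no_step_gen h).elim
      · exact (no_step_var h).elim
      · exact (no_step_var h).elim
  | lam S ih =>
      intro m Q hp h
      simp only [Tm.subst, shift_gen] at h
      cases h with
      | lam h' =>
          obtain ⟨S', hS', rfl, hpS'⟩ := ih (m+1) _ hp h'
          exact ⟨Tm.lam S', BStep.lam hS', by simp [Tm.subst, shift_gen], hpS'⟩
  | app P1 P2 ih1 ih2 =>
      intro m Q hp h
      simp only [Tm.subst] at h
      rcases bstep_app_inv h with ⟨S, hS, rfl⟩ | ⟨X', h', rfl⟩ | ⟨Y', h', rfl⟩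
      · obtain ⟨S0, rfl, rfl⟩ := subst_eq_lam hS
        exact ⟨Tm.subst 0 P2 S0, BStep.beta S0 P2,
          (subst_subst_gen a S0 P2 0 m (Nat.zero_le m)).symm,
          pure_subst S0 0 P2 hp.2 hp.1⟩
      · obtain ⟨P1', h1, rfl, hp1⟩ := ih1 m _ hp.1 h'
        exact ⟨Tm.app P1' P2, BStep.appL P2 h1, by simp [Tm.subst], hp1, hp.2⟩
      · obtain ⟨P2', h2, rfl, hp2⟩ := ih2 m _ hp.2 h'
        exact ⟨Tm.app P1 P2', BStep.appR P1 h2, by simp [Tm.subst], hp.1, hp2⟩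
  | star =>
      intro m Q hp _; exact hp.elim
  | guard _ _ _ _ =>
      intro m Q hp _; exact hp.elim
  | gen b =>
      intro m Q hp _; exact hp.elim
  | verif b M ih =>
      intro m Q hp _; exact hp.elim

/-- Lifting a β-reduction of `P[m := ✠a]` to `✠a` (P pure): then P reduces to var m. -/
lemma liftSteps (a : ℕ) : ∀ {t : Tm}, Relation.ReflTransGen BStep t (Tm.gen a) →
    ∀ (P : Tm) (m : ℕ), t = Tm.subst m (Tm.gen a) P → Tm.Pure P →
    Relation.ReflTransGen BStep P (Tm.var m) := by
  intro t h
  induction h using Relation.ReflTransGen.head_induction_on with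
  | refl =>
      intro P m heq hp
      -- subst m ✠ P = ✠, P pure ⟹ P = var m
      cases P with
      | var n =>
          simp only [Tm.subst] at heq
          split_ifs at heq with h1 h2
          case pos => subst h1; exact Relation.ReflTransGen.refl
          all_goals exact absurd heq (by simp)
      | lam S => exact absurd heq (by simp [Tm.subst])
      | app P1 P2 => exact absurd heq (by simp [Tm.subst])
      | star => exact hp.elim
      | guard _ _ => exact hp.elim
      | gen b => exact hp.elim
      | verif _ _ => exact hp.elim
  | head h' hrest ih =>
      intro P m heq hp; subst heq
      obtain ⟨P', hP, rfl, hp'⟩ := lift a P m _ hp h'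
      exact Relation.ReflTransGen.head hP (ih P' m rfl hp')

lemma rtg_lam {S T : Tm} (h : Relation.ReflTransGen BStep S T) :
    Relation.ReflTransGen BStep (Tm.lam S) (Tm.lam T) :=
  Relation.ReflTransGen.lift Tm.lam (fun _ _ h => BStep.lam h) _ _ h

lemma rtg_eqv {r : Tm → Tm → Prop} {S T : Tm} (h : Relation.ReflTransGen r S T) :
    Relation.EqvGen r S T := by
  induction h with
  | refl => exact Relation.EqvGen.refl S
  | tail _ h2 ih => exact Relation.EqvGen.trans _ _ _ ih (Relation.EqvGen.rel _ _ h2)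

/-- Main decomposition: a β-reduction of `U ✠a` to `✠a` (U pure) shows U =β λx.x. -/
lemma main (a : ℕ) : ∀ {t : Tm}, Relation.ReflTransGen BStep t (Tm.gen a) →
    ∀ U, t = Tm.app U (Tm.gen a) → Tm.Pure U →
    Relation.EqvGen BStep U (Tm.lam (Tm.var 0)) := by
  intro t h
  induction h using Relation.ReflTransGen.head_induction_on with
  | refl =>
      intro U hU; cases hU
  | head h' hrest ih =>
      intro U hU hp; subst hU
      cases h' with
      | beta S N =>
          -- U = lam S, and subst 0 ✠ S ↠ ✠
          have hS : Relation.ReflTransGen BStep S (Tm.var 0) :=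
            liftSteps a hrest S 0 rfl hp
          exact rtg_eqv (rtg_lam hS)
      | appL _ h'' =>
          rename_i U'
          have hp' : Tm.Pure U' := pure_step h'' hp
          exact Relation.EqvGen.trans _ _ _ (Relation.EqvGen.rel _ _ h'')
            (ih U' rfl hp')
      | appR _ h'' => exact (no_step_gen h'').elim

end AuxId

/-- Specification of the identity type: if M is a pure
β-normalizing metaterm with ⟨𝐚⇒𝐚⟩M ↠ ⋆ then M is β-convertible to λx.x. -/
theorem identity_specification (a : ℕ) (M : Tm)
    (hpure : Tm.Pure M)
    (hnorm : ∃ N, Relation.ReflTransGen BStep M N ∧ ∀ P, ¬ BStep N P)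
    (h : Relation.ReflTransGen Step
      (verifT (Ty.arrow (Ty.atom a) (Ty.atom a)) M) Tm.star) :
    Relation.EqvGen BStep M (Tm.lam (Tm.var 0)) := by
  have h1 : Relation.ReflTransGen Step (Tm.verif a (Tm.app M (Tm.gen a))) Tm.star := h
  have h2 : Relation.ReflTransGen Step (Tm.app M (Tm.gen a)) (Tm.gen a) :=
    AuxId.verif_star h1 _ rfl
  have h3 : Relation.ReflTransGen BStep (Tm.app M (Tm.gen a)) (Tm.gen a) :=
    AuxId.steps_quasi h2 ⟨AuxId.pure_quasi M hpure, trivial⟩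
  exact AuxId.main a h3 M rfl hpure
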